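/- Let R be a commutative Noetherian ring. If for every module-finite commutative R-algebra that is an integral domain the category of its finitely generated modules has a generator, then for every module-finite commutative R-algebra A the category of finitely generated A-modules has a generator. -/

import Mathlib

open CategoryTheory

universe u

/-- A commutative ring `A` is a regular local ring if it is Noetherian, local, and its
maximal ideal can be generated by `d` elements, where `d` is the Krull dimension of `A`. -/
def IsRegularLocal (A : Type u) [CommRing A] : Prop :=
  IsNoetherianRing A ∧ ∃ h : IsLocalRing A,
    ∃ s : Finset A, Ideal.span (s : Set A) = @IsLocalRing.maximalIdeal A _ h ∧
      (s.card : WithBot (WithTop ℕ)) = ringKrullDim A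

/-- The regular locus of `R`: the set of primes `p` such that the localization `R_p`
is a regular local ring. -/
def regularLocus (R : Type u) [CommRing R] : Set (PrimeSpectrum R) :=
  { p | IsRegularLocal (Localization.AtPrime p.asIdeal) }

/-- A commutative ring is regular if all its localizations at primes are regular local rings. -/
def IsRegularRing' (A : Type u) [CommRing A] : Prop :=
  ∀ q : PrimeSpectrum A, IsRegularLocal (Localization.AtPrime q.asIdeal)

/-- `M` has finite projective dimension over `R` if it admits a finite-length
resolution by projective `R`-modules. -/
def HasFiniteProjDim (R : Type u) [CommRing R] (M : Type u) [AddCommGroup M]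
    [Module R M] : Prop :=
  ∃ (n : ℕ) (P : ℕ → ModuleCat.{u} R) (d : ∀ i, P (i + 1) →ₗ[R] P i) (ε : P 0 →ₗ[R] M),
    (∀ i, Module.Projective R (P i)) ∧
    Function.Surjective ε ∧
    LinearMap.range (d 0) = LinearMap.ker ε ∧
    (∀ i, LinearMap.range (d (i + 1)) = LinearMap.ker (d i)) ∧
    (∀ i, n < i → Subsingleton (P i))

/-- The locus of primes `p` where the localization `M_p` has finite projective
dimension over `R_p`. -/
def finProjDimLocus (R : Type u) [CommRing R] (M : Type u) [AddCommGroup M]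
    [Module R M] : Set (PrimeSpectrum R) :=
  { p | HasFiniteProjDim (Localization.AtPrime p.asIdeal)
      (LocalizedModule p.asIdeal.primeCompl M) }

/-- `G` is a generator for the category of finitely generated `R`-modules:
`G` is finitely generated, and any class of finitely generated modules containing `G`
which is closed under isomorphisms and direct summands and satisfies the two-out-of-three
property for short exact sequences contains all finitely generated modules. -/
def IsModGenerator (R : Type u) [CommRing R] (G : ModuleCat.{u} R) : Prop :=
  Module.Finite R G ∧
  ∀ S : Set (ModuleCat.{u} R),
    G ∈ S →
    (∀ M N : ModuleCat.{u} R, M ∈ S → Nonempty (M ≃ₗ[R] N) → N ∈ S) →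
    (∀ M N : ModuleCat.{u} R, Module.Finite R M → Module.Finite R N → M ∈ S →
      (∃ (i : N →ₗ[R] M) (r : M →ₗ[R] N), r ∘ₗ i = LinearMap.id) → N ∈ S) →
    (∀ X Y Z : ModuleCat.{u} R, Module.Finite R X → Module.Finite R Y → Module.Finite R Z →
      ∀ (f : X →ₗ[R] Y) (g : Y →ₗ[R] Z), Function.Injective f → Function.Surjective g →
        LinearMap.range f = LinearMap.ker g →
        ((X ∈ S ∧ Y ∈ S → Z ∈ S) ∧ (Y ∈ S ∧ Z ∈ S → X ∈ S) ∧ (X ∈ S ∧ Z ∈ S → Y ∈ S))) →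
    ∀ M : ModuleCat.{u} R, Module.Finite R M → M ∈ S

section Helpers

/-- Restriction of scalars of a module along a ring hom, as an object of `ModuleCat`. -/
def resMod {A B : Type u} [CommRing A] [CommRing B] (f : A →+* B)
    (N : ModuleCat.{u} B) : ModuleCat.{u} A :=
  letI : Module A N := Module.compHom N f
  ModuleCat.of A N

/-- Restriction of scalars of a linear map. -/
def resMap {A B : Type u} [CommRing A] [CommRing B] (f : A →+* B)
    {N₁ N₂ : ModuleCat.{u} B} (g : N₁ →ₗ[B] N₂) :
    ↥(resMod f N₁) →ₗ[A] ↥(resMod f N₂) :=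
  { g with map_smul' := fun a x => g.map_smul (f a) x }

/-- Restriction of scalars of a linear equivalence. -/
def resEquiv {A B : Type u} [CommRing A] [CommRing B] (f : A →+* B)
    {N₁ N₂ : ModuleCat.{u} B} (e : N₁ ≃ₗ[B] N₂) :
    ↥(resMod f N₁) ≃ₗ[A] ↥(resMod f N₂) :=
  { e.toAddEquiv with map_smul' := fun a x => e.map_smul (f a) x }

lemma finite_push {A B : Type u} [CommRing A] [CommRing B] (f : A →+* B)
    {N : Type u} [AddCommGroup N] [Module A N] [Module B N]
    (hcomp : ∀ (a : A) (n : N), f a • n = a • n) (h : Module.Finite A N) :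
    Module.Finite B N := by
  obtain ⟨s, hs⟩ := h.fg_top
  refine ⟨⟨s, eq_top_iff.2 fun x _ => ?_⟩⟩
  have hx : x ∈ Submodule.span A (s : Set N) := by rw [hs]; trivial
  refine Submodule.span_induction (p := fun y _ => y ∈ Submodule.span B (s : Set N))
    (fun y hy => Submodule.subset_span hy) (Submodule.zero_mem _)
    (fun y z _ _ hy hz => Submodule.add_mem _ hy hz) (fun a y _ hy => ?_) hx
  have h2 : f a • y ∈ Submodule.span B (s : Set N) := Submodule.smul_mem _ _ hy
  rwa [hcomp] at h2

lemma finite_pull {A B : Type u} [CommRing A] [CommRing B] (f : A →+* B)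
    (hf : Function.Surjective f) {N : Type u} [AddCommGroup N] [Module A N] [Module B N]
    (hcomp : ∀ (a : A) (n : N), f a • n = a • n) (h : Module.Finite B N) :
    Module.Finite A N := by
  obtain ⟨s, hs⟩ := h.fg_top
  refine ⟨⟨s, eq_top_iff.2 fun x _ => ?_⟩⟩
  have hx : x ∈ Submodule.span B (s : Set N) := by rw [hs]; trivial
  refine Submodule.span_induction (p := fun y _ => y ∈ Submodule.span A (s : Set N))
    (fun y hy => Submodule.subset_span hy) (Submodule.zero_mem _)
    (fun y z _ _ hy hz => Submodule.add_mem _ hy hz) (fun b y _ hy => ?_) hx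
  obtain ⟨a, rfl⟩ := hf b
  have h2 : a • y ∈ Submodule.span A (s : Set N) := Submodule.smul_mem _ _ hy
  rwa [← hcomp] at h2

lemma resMod_finite {A B : Type u} [CommRing A] [CommRing B] (f : A →+* B)
    (hf : Function.Surjective f) (N : ModuleCat.{u} B) (h : Module.Finite B N) :
    Module.Finite A (resMod f N) := by
  letI : Module A N := Module.compHom N f
  letI hB : Module B ↥(resMod f N) := N.isModule
  exact finite_pull f hf (fun a n => rfl) h

end Helpers


/-- If for every module-finite commutative algebra domain over a commutative Noetherian ring
`R` the category of its finitely generated modules has a generator, then for every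
module-finite commutative `R`-algebra `A` the category of finitely generated `A`-modules has
a generator. -/
theorem moduleFinite_hasGenerator_of_domain_generator (R : Type u) [CommRing R]
    [IsNoetherianRing R]
    (h : ∀ (A : Type u) [CommRing A] [Algebra R A] [Module.Finite R A] [IsDomain A],
      ∃ G : ModuleCat.{u} A, IsModGenerator A G) :
    ∀ (A : Type u) [CommRing A] [Algebra R A] [Module.Finite R A],
      ∃ G : ModuleCat.{u} A, IsModGenerator A G := by
  intro A _ _ _
  haveI : IsNoetherianRing A := Algebra.FiniteType.isNoetherianRing R A
  -- relative generators for every ideal I : a finitely generated module G such that every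
  -- closed class containing G contains every finitely generated module killed by I.
  have key : ∀ I : Ideal A,
      ∃ G : ModuleCat.{u} A, Module.Finite A G ∧
      ∀ S : Set (ModuleCat.{u} A),
        G ∈ S →
        (∀ M N : ModuleCat.{u} A, M ∈ S → Nonempty (M ≃ₗ[A] N) → N ∈ S) →
        (∀ M N : ModuleCat.{u} A, Module.Finite A M → Module.Finite A N → M ∈ S →
          (∃ (i : N →ₗ[A] M) (r : M →ₗ[A] N), r ∘ₗ i = LinearMap.id) → N ∈ S) →
        (∀ X Y Z : ModuleCat.{u} A, Module.Finite A X → Module.Finite A Y → Module.Finite A Z →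
          ∀ (f : X →ₗ[A] Y) (g : Y →ₗ[A] Z), Function.Injective f → Function.Surjective g →
            LinearMap.range f = LinearMap.ker g →
            ((X ∈ S ∧ Y ∈ S → Z ∈ S) ∧ (Y ∈ S ∧ Z ∈ S → X ∈ S) ∧ (X ∈ S ∧ Z ∈ S → Y ∈ S))) →
        ∀ M : ModuleCat.{u} A, Module.Finite A M → (∀ x ∈ I, ∀ m : M, x • m = 0) → M ∈ S := by
    intro I
    induction I using IsNoetherian.induction with
    | _ I IH =>
    by_cases htop : I = ⊤
    · -- all modules killed by ⊤ are trivial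
      refine ⟨ModuleCat.of A PUnit.{u+1}, inferInstance, ?_⟩
      intro S hGS hiso _ _ M _ hMtor
      have hM0 : ∀ m : ↥M, m = 0 := fun m => by
        have := hMtor 1 (htop ▸ Submodule.mem_top) m
        simpa using this
      haveI : Subsingleton ↥M := ⟨fun x y => by rw [hM0 x, hM0 y]⟩
      refine hiso _ M hGS ⟨LinearEquiv.ofBijective 0 ⟨fun x y _ => Subsingleton.elim x y,
        fun y => ⟨0, Subsingleton.elim _ _⟩⟩⟩
    by_cases hprime : Ideal.IsPrime (I : Ideal A)
    · -- prime case : use the hypothesis on the domain A ⧸ I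
      haveI : Ideal.IsPrime (I : Ideal A) := hprime
      obtain ⟨G', hG'fin, hG'gen⟩ := h (A ⧸ (I : Ideal A))
      set f : A →+* A ⧸ I := Ideal.Quotient.mk I with hf
      refine ⟨resMod f G', resMod_finite f Ideal.Quotient.mk_surjective G' hG'fin, ?_⟩
      intro S hGS hiso hsum h23 M hMfin hMtor
      have htor : Module.IsTorsionBySet A ↥M (I : Set A) := fun m a => hMtor a a.2 m
      letI : Module (A ⧸ I) ↥M := htor.module
      set S' : Set (ModuleCat.{u} (A ⧸ I)) := { N | resMod f N ∈ S } with hS'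
      have hmem : (ModuleCat.of (A ⧸ I) ↥M) ∈ S' := by
        have hMfin' : Module.Finite (A ⧸ I) ↥M := finite_push f (fun a n => rfl) hMfin
        refine hG'gen S' hGS ?_ ?_ ?_ (ModuleCat.of (A ⧸ I) ↥M) hMfin'
        · rintro N₁ N₂ h₁ ⟨e⟩
          exact hiso (resMod f N₁) (resMod f N₂) h₁ ⟨resEquiv f e⟩
        · rintro N₁ N₂ hfin₁ hfin₂ h₁ ⟨i, r, hri⟩
          refine hsum (resMod f N₁) (resMod f N₂)
            (resMod_finite f Ideal.Quotient.mk_surjective N₁ hfin₁)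
            (resMod_finite f Ideal.Quotient.mk_surjective N₂ hfin₂) h₁
            ⟨resMap f i, resMap f r, ?_⟩
          ext x
          exact DFunLike.congr_fun hri x
        · rintro X Y Z hX hY hZ f' g' hinj hsurj hfg
          refine h23 (resMod f X) (resMod f Y) (resMod f Z)
            (resMod_finite f Ideal.Quotient.mk_surjective X hX)
            (resMod_finite f Ideal.Quotient.mk_surjective Y hY)
            (resMod_finite f Ideal.Quotient.mk_surjective Z hZ)
            (resMap f f') (resMap f g') hinj hsurj ?_
          apply le_antisymm
          · rintro x ⟨y, rfl⟩
            have hy : f' (show ↥X from y) ∈ LinearMap.ker g' :=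
              hfg ▸ LinearMap.mem_range_self f' (show ↥X from y)
            exact hy
          · intro x hx
            have hx' : x ∈ LinearMap.range f' := by
              rw [hfg]; exact hx
            obtain ⟨y, rfl⟩ := hx'
            exact ⟨y, rfl⟩
      refine hiso (resMod f (ModuleCat.of (A ⧸ I) ↥M)) M hmem ⟨?_⟩
      exact (AddEquiv.refl ↥M).toLinearEquiv fun c x => rfl
    · -- composite case : pick a * b ∈ I with a ∉ I, b ∉ I
      obtain ⟨a, b, hab, ha, hb⟩ : ∃ a b : A, a * b ∈ I ∧ a ∉ I ∧ b ∉ I := by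
        by_contra hcon
        push_neg at hcon
        refine hprime ⟨htop, fun {x y} hxy => ?_⟩
        by_contra hc
        push_neg at hc
        exact hc.2 (hcon x y hxy hc.1)
      have hJ₁ : I < I ⊔ Ideal.span {a} :=
        lt_of_le_of_ne le_sup_left fun hEq =>
          ha (hEq ▸ Submodule.mem_sup_right (Ideal.subset_span rfl))
      have hJ₂ : I < I ⊔ Ideal.span {b} :=
        lt_of_le_of_ne le_sup_left fun hEq =>
          hb (hEq ▸ Submodule.mem_sup_right (Ideal.subset_span rfl))
      obtain ⟨G₁, hfin₁, hgen₁⟩ := IH _ hJ₁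
      obtain ⟨G₂, hfin₂, hgen₂⟩ := IH _ hJ₂
      haveI := hfin₁; haveI := hfin₂
      refine ⟨ModuleCat.of A (↥G₁ × ↥G₂), inferInstanceAs (Module.Finite A (↥G₁ × ↥G₂)), ?_⟩
      intro S hGS hiso hsum h23 M hMfin hMtor
      haveI := hMfin
      have hG₁S : G₁ ∈ S := by
        refine hsum (ModuleCat.of A (↥G₁ × ↥G₂)) G₁
          (inferInstanceAs (Module.Finite A (↥G₁ × ↥G₂))) hfin₁ hGS
          ⟨LinearMap.inl A ↥G₁ ↥G₂, LinearMap.fst A ↥G₁ ↥G₂, ?_⟩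
        ext x; rfl
      have hG₂S : G₂ ∈ S := by
        refine hsum (ModuleCat.of A (↥G₁ × ↥G₂)) G₂
          (inferInstanceAs (Module.Finite A (↥G₁ × ↥G₂))) hfin₂ hGS
          ⟨LinearMap.inr A ↥G₁ ↥G₂, LinearMap.snd A ↥G₁ ↥G₂, ?_⟩
        ext x; rfl
      set φ : ↥M →ₗ[A] ↥M := a • LinearMap.id with hφ
      set N : Submodule A ↥M := LinearMap.range φ with hN
      have hNtor : ∀ x ∈ I ⊔ Ideal.span {b}, ∀ n : ↥N, x • n = 0 := by
        intro x hx n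
        obtain ⟨y, hy, z, hz, rfl⟩ := Submodule.mem_sup.mp hx
        obtain ⟨c, rfl⟩ := Ideal.mem_span_singleton'.mp hz
        obtain ⟨m, hm⟩ := n.2
        refine Subtype.ext ?_
        show (y + c * b) • (n : ↥M) = 0
        have hn : a • m = (n : ↥M) := by simpa [hφ] using hm
        have h1 : (y * a) • m = (0 : ↥M) := hMtor (y * a) (Ideal.mul_mem_right a I hy) m
        have h2 : (c * b * a) • m = (0 : ↥M) := by
          have hcb : c * b * a = c * (a * b) := by ring
          rw [hcb, mul_smul, hMtor (a * b) hab m, smul_zero]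
        rw [← hn, smul_smul, add_mul, add_smul, h1, h2, add_zero]
      have hNS : (ModuleCat.of A ↥N) ∈ S := by
        refine hgen₂ S hG₂S hiso hsum h23 (ModuleCat.of A ↥N)
          (inferInstanceAs (Module.Finite A ↥N)) hNtor
      have hQS : (ModuleCat.of A (↥M ⧸ N)) ∈ S := by
        refine hgen₁ S hG₁S hiso hsum h23 (ModuleCat.of A (↥M ⧸ N))
          (inferInstanceAs (Module.Finite A (↥M ⧸ N))) ?_
        intro x hx q
        obtain ⟨m, rfl⟩ := N.mkQ_surjective q
        obtain ⟨y, hy, z, hz, rfl⟩ := Submodule.mem_sup.mp hx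
        obtain ⟨c, rfl⟩ := Ideal.mem_span_singleton'.mp hz
        show (y + c * a) • Submodule.Quotient.mk m = (0 : ↥M ⧸ N)
        rw [← Submodule.Quotient.mk_smul, Submodule.Quotient.mk_eq_zero]
        have : (y + c * a) • m = a • (c • m) := by
          rw [add_smul, hMtor y hy m, zero_add, mul_smul, smul_comm]
        rw [this]
        exact ⟨c • m, rfl⟩
      exact (h23 (ModuleCat.of A ↥N) M (ModuleCat.of A (↥M ⧸ N))
        (inferInstanceAs (Module.Finite A ↥N)) hMfin
        (inferInstanceAs (Module.Finite A (↥M ⧸ N))) N.subtype N.mkQ N.injective_subtype N.mkQ_surjective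
        (by rw [Submodule.range_subtype, Submodule.ker_mkQ])).2.2 ⟨hNS, hQS⟩
  obtain ⟨G, hGfin, hGgen⟩ := key ⊥
  refine ⟨G, hGfin, fun S hGS hiso hsum h23 M hMfin =>
    hGgen S hGS hiso hsum h23 M hMfin fun x hx m => ?_⟩
  rw [Ideal.mem_bot.mp hx, zero_smul]
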